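/- Let 0 < λ < 1 and let a₁ = 0 < a₂ < … < a_k be natural numbers. Then every real t ∈ [0, λ·a_k/(1−λ)] has a representation t = ∑_{i=1}^∞ w(i)·λ^i with w(i) ∈ {a₁,…,a_k} for all i, if and only if for every j ∈ {1,…,k−1}, a_{j+1} − a_j ≤ λ·a_k/(1−λ). -/

import Mathlib

open Finset Filter

namespace GTDS

variable {k : ℕ}

/-- Greedy digit choice: largest index `j` with `a j ≤ x`. -/
noncomputable def J (a : Fin (k + 1) → ℕ) (x : ℝ) : Fin (k + 1) :=
  if h : (Finset.univ.filter fun j => (a j : ℝ) ≤ x).Nonempty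
  then (Finset.univ.filter fun j => (a j : ℝ) ≤ x).max' h else 0

lemma J_nonempty {a : Fin (k + 1) → ℕ} (ha0 : a 0 = 0) {x : ℝ} (hx : 0 ≤ x) :
    (Finset.univ.filter fun j => (a j : ℝ) ≤ x).Nonempty :=
  ⟨0, by simp [ha0, hx]⟩

lemma J_le {a : Fin (k + 1) → ℕ} (ha0 : a 0 = 0) {x : ℝ} (hx : 0 ≤ x) :
    (a (J a x) : ℝ) ≤ x := by
  rw [J, dif_pos (J_nonempty ha0 hx)]
  have h := Finset.max'_mem _ (J_nonempty ha0 hx)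
  simpa using (Finset.mem_filter.1 h).2

lemma le_J {a : Fin (k + 1) → ℕ} (ha0 : a 0 = 0) {x : ℝ} (hx : 0 ≤ x)
    {j : Fin (k + 1)} (hj : (a j : ℝ) ≤ x) : j ≤ J a x := by
  rw [J, dif_pos (J_nonempty ha0 hx)]
  exact Finset.le_max' _ _ (by simp [hj])

/-- Greedy remainder sequence. -/
noncomputable def g (l : ℝ) (a : Fin (k + 1) → ℕ) (t : ℝ) : ℕ → ℝ
  | 0 => t
  | n + 1 => g l a t n / l - a (J a (g l a t n / l))

lemma step {l : ℝ} (h0 : 0 < l) (h1 : l < 1) {a : Fin (k + 1) → ℕ}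
    (ha0 : a 0 = 0) (hmono : StrictMono a)
    (hgap : ∀ j : Fin k, ((a j.succ : ℝ) - (a j.castSucc : ℝ)) ≤ l * (a (Fin.last k)) / (1 - l))
    {gv : ℝ} (hg0 : 0 ≤ gv) (hgM : gv ≤ l * (a (Fin.last k)) / (1 - l)) :
    0 ≤ gv / l - a (J a (gv / l)) ∧
      gv / l - a (J a (gv / l)) ≤ l * (a (Fin.last k)) / (1 - l) := by
  have hl1 : 0 < 1 - l := by linarith
  have hx0 : 0 ≤ gv / l := div_nonneg hg0 h0.le
  have hJle := J_le ha0 hx0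
  refine ⟨by linarith, ?_⟩
  by_cases hlast : J a (gv / l) = Fin.last k
  · rw [hlast]
    set A : ℝ := (a (Fin.last k) : ℝ)
    have hA0 : 0 ≤ A := Nat.cast_nonneg _
    have hx : gv / l ≤ A / (1 - l) := by
      rw [div_le_div_iff₀ h0 hl1]
      have h' := (le_div_iff₀ hl1).mp hgM
      linarith
    have key : A / (1 - l) - A = l * A / (1 - l) := by field_simp; ring
    linarith
  · have hval : (J a (gv / l)).val < k := by
      rcases Fin.lt_or_eq_of_le (Fin.le_last (J a (gv / l))) with h | h
      · simpa [Fin.lt_iff_val_lt_val, Fin.last] using h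
      · exact absurd h hlast
    set j' : Fin k := ⟨(J a (gv / l)).val, hval⟩ with hj'
    have hcast : j'.castSucc = J a (gv / l) := by
      apply Fin.ext; simp [hj']
    have hlt : gv / l < (a j'.succ : ℝ) := by
      by_contra hcon
      push_neg at hcon
      have := le_J ha0 hx0 hcon
      have h2 : (j'.succ : Fin (k + 1)).val ≤ (J a (gv / l)).val := this
      simp only [Fin.val_succ] at h2
      have h3 : (j'.succ).val = j'.val + 1 := rfl
      have h5 : (j'.castSucc).val = j'.val := rfl
      have h4 := congrArg Fin.val hcast
      have h6 : ((⟨(J a (gv / l)).val, hval⟩ : Fin k) : ℕ) = (J a (gv / l)).val := rfl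
      omega
    have := hgap j'
    rw [hcast] at this
    linarith

end GTDS

open GTDS Finset Filter in
/-- With digits a₀ = 0 < a₁ < … < a_k, every t ∈ [0, λ·a_k/(1-λ)] is representable as
∑_{i≥1} w(i)·λ^i with digits among the a_j iff consecutive digit gaps are at most
λ·a_k/(1-λ). -/
theorem gtds_full_interval (l : ℝ) (h0 : 0 < l) (h1 : l < 1)
    (k : ℕ) (a : Fin (k + 1) → ℕ) (ha0 : a 0 = 0) (hmono : StrictMono a) :
    (∀ t : ℝ, 0 ≤ t → t ≤ l * (a (Fin.last k)) / (1 - l) →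
      ∃ w : ℕ → ℕ, (∀ i, ∃ j, w i = a j) ∧
        ∑' i : ℕ, (w i : ℝ) * l ^ (i + 1) = t) ↔
    (∀ j : Fin k, ((a j.succ : ℝ) - (a j.castSucc : ℝ)) ≤ l * (a (Fin.last k)) / (1 - l)) := by
  have hl1 : 0 < 1 - l := by linarith
  set M : ℝ := l * (a (Fin.last k)) / (1 - l) with hMdef
  have hA0 : (0 : ℝ) ≤ (a (Fin.last k) : ℝ) := Nat.cast_nonneg _
  have hM0 : 0 ≤ M := by positivity
  have hsumgeo : Summable (fun i : ℕ => ((a (Fin.last k) : ℝ) * l) * l ^ i) :=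
    (summable_geometric_of_lt_one h0.le h1).mul_left _
  constructor
  · -- representability → gaps small
    intro hrep j
    by_contra hgap
    push_neg at hgap
    set t : ℝ := (l * ((a j.castSucc : ℝ) + M) + l * (a j.succ : ℝ)) / 2 with htdef
    have hmid : (a j.castSucc : ℝ) + M < (a j.succ : ℝ) := by linarith
    have hlow : l * ((a j.castSucc : ℝ) + M) < t := by
      have := mul_lt_mul_of_pos_left hmid h0
      rw [htdef]; linarith
    have hhigh : t < l * (a j.succ : ℝ) := by
      have := mul_lt_mul_of_pos_left hmid h0
      rw [htdef]; linarith
    have hja0 : (0 : ℝ) ≤ (a j.castSucc : ℝ) := Nat.cast_nonneg _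
    have ht0 : 0 ≤ t := by nlinarith
    have hsle : (a j.succ : ℝ) ≤ (a (Fin.last k) : ℝ) :=
      Nat.cast_le.2 (hmono.monotone (Fin.le_last _))
    have hlAM : l * (a (Fin.last k) : ℝ) ≤ M := by
      rw [hMdef, le_div_iff₀ hl1]
      nlinarith [mul_nonneg (mul_nonneg h0.le hA0) h0.le]
    have htM : t ≤ M := by nlinarith
    obtain ⟨w, hw, hsum⟩ := hrep t ht0 htM
    have hwle : ∀ i, (w i : ℝ) ≤ (a (Fin.last k) : ℝ) := by
      intro i
      obtain ⟨j₀, hj₀⟩ := hw i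
      rw [hj₀]
      exact Nat.cast_le.2 (hmono.monotone (Fin.le_last _))
    have hnn : ∀ i, 0 ≤ (w i : ℝ) * l ^ (i + 1) := fun i => by positivity
    have hsummable : Summable (fun i : ℕ => (w i : ℝ) * l ^ (i + 1)) := by
      refine Summable.of_nonneg_of_le hnn (fun i => ?_) hsumgeo
      have := mul_le_mul_of_nonneg_right (hwle i) (pow_nonneg h0.le (i + 1))
      calc (w i : ℝ) * l ^ (i + 1) ≤ (a (Fin.last k) : ℝ) * l ^ (i + 1) := this
        _ = ((a (Fin.last k) : ℝ) * l) * l ^ i := by ring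
    obtain ⟨j₀, hj₀⟩ := hw 0
    rcases le_or_gt j₀ j.castSucc with hcase | hcase
    · -- w 0 ≤ a j.castSucc, sum too small
      have hw0 : (w 0 : ℝ) ≤ (a j.castSucc : ℝ) := by
        rw [hj₀]; exact Nat.cast_le.2 (hmono.monotone hcase)
      have htail_sum : Summable (fun i : ℕ => (w (i + 1) : ℝ) * l ^ (i + 2)) := by
        have := hsummable.comp_injective (add_left_injective 1)
        exact this
      have hsplit : t = (w 0 : ℝ) * l ^ 1 + ∑' i : ℕ, (w (i + 1) : ℝ) * l ^ (i + 2) := by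
        rw [← hsum, hsummable.tsum_eq_zero_add]
      have hgeo2 : Summable (fun i : ℕ => ((a (Fin.last k) : ℝ) * l ^ 2) * l ^ i) :=
        (summable_geometric_of_lt_one h0.le h1).mul_left _
      have htail : ∑' i : ℕ, (w (i + 1) : ℝ) * l ^ (i + 2) ≤ l * M := by
        have hle : ∑' i : ℕ, (w (i + 1) : ℝ) * l ^ (i + 2)
            ≤ ∑' i : ℕ, ((a (Fin.last k) : ℝ) * l ^ 2) * l ^ i := by
          refine Summable.tsum_le_tsum (fun i => ?_) htail_sum hgeo2
          have := mul_le_mul_of_nonneg_right (hwle (i + 1)) (pow_nonneg h0.le (i + 2))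
          calc (w (i + 1) : ℝ) * l ^ (i + 2) ≤ (a (Fin.last k) : ℝ) * l ^ (i + 2) := this
            _ = ((a (Fin.last k) : ℝ) * l ^ 2) * l ^ i := by ring
        have hval : ∑' i : ℕ, ((a (Fin.last k) : ℝ) * l ^ 2) * l ^ i
            = ((a (Fin.last k) : ℝ) * l ^ 2) * (1 - l)⁻¹ := by
          rw [tsum_mul_left, tsum_geometric_of_lt_one h0.le h1]
        have heq : ((a (Fin.last k) : ℝ) * l ^ 2) * (1 - l)⁻¹ = l * M := by
          rw [hMdef]; field_simp
        rw [hval, heq] at hle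
        exact hle
      have : t ≤ (a j.castSucc : ℝ) * l + l * M := by
        have : (w 0 : ℝ) * l ^ 1 ≤ (a j.castSucc : ℝ) * l := by
          rw [pow_one]; exact mul_le_mul_of_nonneg_right hw0 h0.le
        linarith [hsplit ▸ le_refl t, htail, this]
      nlinarith
    · -- w 0 ≥ a j.succ, sum too big
      have hsle' : j.succ ≤ j₀ := Fin.castSucc_lt_iff_succ_le.mp hcase
      have hw0 : (a j.succ : ℝ) ≤ (w 0 : ℝ) := by
        rw [hj₀]; exact Nat.cast_le.2 (hmono.monotone hsle')
      have hfirst : (w 0 : ℝ) * l ^ 1 ≤ t := by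
        rw [← hsum]
        exact Summable.le_tsum hsummable 0 (fun i _ => hnn i)
      rw [pow_one] at hfirst
      nlinarith
  · -- gaps small → representability
    intro hgap t ht0 htM
    set gs : ℕ → ℝ := g l a t with hgs
    have hinv : ∀ n, 0 ≤ gs n ∧ gs n ≤ M := by
      intro n
      induction n with
      | zero => exact ⟨ht0, htM⟩
      | succ n ih =>
        have := step h0 h1 ha0 hmono hgap ih.1 ih.2
        simpa [hgs, g] using this
    refine ⟨fun i => a (J a (gs i / l)), fun i => ⟨_, rfl⟩, ?_⟩
    set w : ℕ → ℝ := fun i => (a (J a (gs i / l)) : ℝ) with hwdef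
    have hwle : ∀ i, w i ≤ (a (Fin.last k) : ℝ) :=
      fun i => Nat.cast_le.2 (hmono.monotone (Fin.le_last _))
    have hwnn : ∀ i, 0 ≤ w i := fun i => Nat.cast_nonneg _
    have hnn : ∀ i, 0 ≤ w i * l ^ (i + 1) := fun i => by positivity
    have hsummable : Summable (fun i : ℕ => w i * l ^ (i + 1)) := by
      refine Summable.of_nonneg_of_le hnn (fun i => ?_) hsumgeo
      have := mul_le_mul_of_nonneg_right (hwle i) (pow_nonneg h0.le (i + 1))
      calc w i * l ^ (i + 1) ≤ (a (Fin.last k) : ℝ) * l ^ (i + 1) := this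
        _ = ((a (Fin.last k) : ℝ) * l) * l ^ i := by ring
    have hps : ∀ n, ∑ i ∈ Finset.range n, w i * l ^ (i + 1) = t - l ^ n * gs n := by
      intro n
      induction n with
      | zero => simp [hgs, g]
      | succ n ih =>
        rw [Finset.sum_range_succ, ih]
        have hstep : gs (n + 1) = gs n / l - w n := by simp [hgs, g, hwdef]
        have hln : l ≠ 0 := ne_of_gt h0
        rw [hstep]
        field_simp
        ring
    have hto0 : Tendsto (fun n => l ^ n * gs n) atTop (nhds 0) := by
      have h1' : ∀ n, l ^ n * gs n ≤ M * l ^ n := by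
        intro n
        have := mul_le_mul_of_nonneg_left (hinv n).2 (pow_nonneg h0.le n)
        linarith [this]
      have h2' : ∀ n, 0 ≤ l ^ n * gs n :=
        fun n => mul_nonneg (pow_nonneg h0.le n) (hinv n).1
      have hg0 : Tendsto (fun n : ℕ => M * l ^ n) atTop (nhds 0) := by
        have := (tendsto_pow_atTop_nhds_zero_of_lt_one h0.le h1).const_mul M
        simpa using this
      exact squeeze_zero h2' h1' hg0
    have hT : Tendsto (fun n => ∑ i ∈ Finset.range n, w i * l ^ (i + 1)) atTop (nhds t) := by
      have : Tendsto (fun n => t - l ^ n * gs n) atTop (nhds (t - 0)) :=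
        tendsto_const_nhds.sub hto0
      rw [sub_zero] at this
      simpa [hps] using this
    have : HasSum (fun i : ℕ => w i * l ^ (i + 1)) t :=
      (hsummable.hasSum_iff_tendsto_nat).mpr hT
    exact this.tsum_eq
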